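/- Let π be a probability vector on {1,...,K} with all π_k > 0, Π = diag(π), and let O be a symmetric positive semidefinite K×K matrix such that B = I − Π^{1/2}OΠ^{1/2} is positive semidefinite with one-dimensional kernel spanned by Π^{1/2}𝟙. Set A = Π − ΠOΠ, Σ_MBAR = A⁺ − Π^{−1} (A⁺ the Moore–Penrose pseudoinverse), and Σ_TSS = O. Then for every pair i, j, (e_j − e_i)ᵀ (Σ_MBAR − Σ_TSS) (e_j − e_i) ≥ 0. -/

import Mathlib

open Finset Matrix

theorem tss_variance_le_mbar (K : ℕ) (hK : 1 ≤ K)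
    (π : Fin K → ℝ) (hπsum : ∑ k, π k = 1) (hπ : ∀ k, 0 < π k)
    (O : Matrix (Fin K) (Fin K) ℝ) (hOsymm : O.IsSymm) (hOPSD : O.PosSemidef)
    (hBPSD : ((1 : Matrix (Fin K) (Fin K) ℝ) -
      Matrix.diagonal (fun i => Real.sqrt (π i)) * O *
        Matrix.diagonal (fun i => Real.sqrt (π i))).PosSemidef)
    (hBker : ∀ v : Fin K → ℝ,
      ((1 : Matrix (Fin K) (Fin K) ℝ) -
        Matrix.diagonal (fun i => Real.sqrt (π i)) * O *
          Matrix.diagonal (fun i => Real.sqrt (π i))).mulVec v = 0 ↔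
      ∃ c : ℝ, v = c • (fun i => Real.sqrt (π i)))
    (Aplus : Matrix (Fin K) (Fin K) ℝ)
    (hMP1 : (Matrix.diagonal π - Matrix.diagonal π * O * Matrix.diagonal π) * Aplus *
      (Matrix.diagonal π - Matrix.diagonal π * O * Matrix.diagonal π) =
      Matrix.diagonal π - Matrix.diagonal π * O * Matrix.diagonal π)
    (hMP2 : Aplus * (Matrix.diagonal π - Matrix.diagonal π * O * Matrix.diagonal π) * Aplus =
      Aplus)
    (hMP3 : ((Matrix.diagonal π - Matrix.diagonal π * O * Matrix.diagonal π) * Aplus)ᵀ =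
      (Matrix.diagonal π - Matrix.diagonal π * O * Matrix.diagonal π) * Aplus)
    (hMP4 : (Aplus * (Matrix.diagonal π - Matrix.diagonal π * O * Matrix.diagonal π))ᵀ =
      Aplus * (Matrix.diagonal π - Matrix.diagonal π * O * Matrix.diagonal π)) :
    ∀ i j : Fin K,
      0 ≤ (Pi.single j 1 - Pi.single i 1) ⬝ᵥ
        ((Aplus - (Matrix.diagonal π)⁻¹ - O).mulVec (Pi.single j 1 - Pi.single i 1)) := by
  intro i j
  set D : Matrix (Fin K) (Fin K) ℝ := Matrix.diagonal π with hDdef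
  set S : Matrix (Fin K) (Fin K) ℝ := Matrix.diagonal (fun i => Real.sqrt (π i)) with hSdef
  set A : Matrix (Fin K) (Fin K) ℝ := D - D * O * D with hAdef
  set B : Matrix (Fin K) (Fin K) ℝ := (1 : Matrix (Fin K) (Fin K) ℝ) - S * O * S with hBdef
  clear_value A B D S
  have hOt : Oᵀ = O := hOsymm
  have hmul : (fun i => Real.sqrt (π i) * Real.sqrt (π i)) = π :=
    funext fun k => Real.mul_self_sqrt (hπ k).le
  have hSS : S * S = D := by
    rw [hSdef, hDdef, Matrix.diagonal_mul_diagonal, hmul]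
  have hAsymm : Aᵀ = A := by
    rw [hAdef]
    simp [Matrix.transpose_sub, Matrix.transpose_mul, hOt, hDdef,
      Matrix.diagonal_transpose, Matrix.mul_assoc]
  have hSBS : S * B * S = A := by
    have h : S * ((1 : Matrix (Fin K) (Fin K) ℝ) - S * O * S) * S
        = S * S - S * S * O * (S * S) := by noncomm_ring
    rw [hBdef, h, hSS, hAdef, Matrix.mul_assoc]
  have hdet : D.det ≠ 0 := by
    rw [hDdef, Matrix.det_diagonal]
    exact ne_of_gt (Finset.prod_pos fun k _ => hπ k)
  have hDDi : D * D⁻¹ = 1 := Matrix.mul_nonsing_inv D (isUnit_iff_ne_zero.mpr hdet)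
  have hSapp : ∀ (x : Fin K → ℝ) (k : Fin K), (S *ᵥ x) k = Real.sqrt (π k) * x k := by
    intro x k; rw [hSdef]; exact Matrix.mulVec_diagonal _ _ _
  have hBsqrt : B *ᵥ (fun k => Real.sqrt (π k)) = 0 :=
    (hBker _).mpr ⟨1, (one_smul ℝ _).symm⟩
  have hSone : S *ᵥ (fun _ => (1 : ℝ)) = fun k => Real.sqrt (π k) := by
    funext k; rw [hSapp]; simp
  have hA1 : A *ᵥ (fun _ => (1 : ℝ)) = 0 := by
    rw [← hSBS, ← Matrix.mulVec_mulVec, ← Matrix.mulVec_mulVec, hSone, hBsqrt,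
      Matrix.mulVec_zero]
  have hAker : ∀ w : Fin K → ℝ, A *ᵥ w = 0 → ∃ c : ℝ, ∀ k, w k = c := by
    intro w hw
    rw [← hSBS, ← Matrix.mulVec_mulVec, ← Matrix.mulVec_mulVec] at hw
    have h1 : B *ᵥ (S *ᵥ w) = 0 := by
      funext k
      have hk := congrFun hw k
      rw [hSapp] at hk
      have hs : Real.sqrt (π k) ≠ 0 := ne_of_gt (Real.sqrt_pos.mpr (hπ k))
      have h2 : Real.sqrt (π k) * (B *ᵥ S *ᵥ w) k = 0 := by simpa using hk
      simpa using (mul_eq_zero.mp h2).resolve_left hs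
    obtain ⟨c, hc⟩ := (hBker _).mp h1
    refine ⟨c, fun k => ?_⟩
    have hk := congrFun hc k
    rw [hSapp, Pi.smul_apply, smul_eq_mul] at hk
    have hs : Real.sqrt (π k) ≠ 0 := ne_of_gt (Real.sqrt_pos.mpr (hπ k))
    exact mul_left_cancel₀ hs (hk.trans (mul_comm c _))
  have hproj : A * (A * Aplus) = A := by
    have h0 : ((1 : Matrix (Fin K) (Fin K) ℝ) - A * Aplus) * A = 0 := by
      rw [sub_mul, one_mul, hMP1, sub_self]
    have h1 := congrArg Matrix.transpose h0
    rw [Matrix.transpose_mul, hAsymm, Matrix.transpose_sub, Matrix.transpose_one, hMP3,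
      Matrix.transpose_zero] at h1
    calc A * (A * Aplus)
        = A - A * ((1 : Matrix (Fin K) (Fin K) ℝ) - A * Aplus) := by noncomm_ring
      _ = A := by rw [h1, sub_zero]
  have hPone : (A * Aplus) *ᵥ (fun _ => (1 : ℝ)) = 0 := by
    have h2 : A * Aplus = Aplusᵀ * A := by
      rw [← hMP3, Matrix.transpose_mul, hAsymm]
    rw [h2, ← Matrix.mulVec_mulVec, hA1, Matrix.mulVec_zero]
  obtain ⟨v, hvdef⟩ : ∃ x : Fin K → ℝ, x = Pi.single j 1 - Pi.single i 1 := ⟨_, rfl⟩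
  rw [← hvdef]
  have hvsum : ∑ k, v k = 0 := by
    rw [hvdef]
    simp [Pi.sub_apply, Finset.sum_sub_distrib]
  -- v is in the range of A
  obtain ⟨u, hAu⟩ : ∃ x : Fin K → ℝ, A *ᵥ x = v := by
    have hw0 : A *ᵥ (v - (A * Aplus) *ᵥ v) = 0 := by
      rw [Matrix.mulVec_sub, Matrix.mulVec_mulVec, hproj, sub_self]
    obtain ⟨c, hc⟩ := hAker _ hw0
    have hwsum : ∑ k, (v - (A * Aplus) *ᵥ v) k = 0 := by
      have h3 : ∑ k, ((A * Aplus) *ᵥ v) k = (fun _ => (1 : ℝ)) ⬝ᵥ ((A * Aplus) *ᵥ v) := by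
        simp [dotProduct]
      have h4 : (fun _ => (1 : ℝ)) ᵥ* (A * Aplus) = 0 := by
        rw [← Matrix.mulVec_transpose, hMP3, hPone]
      simp only [Pi.sub_apply, Finset.sum_sub_distrib, hvsum, h3,
        Matrix.dotProduct_mulVec, h4, zero_dotProduct, sub_zero]
    have hKne : (K : ℝ) ≠ 0 := Nat.cast_ne_zero.mpr (by omega)
    have hKc : (K : ℝ) * c = 0 := by
      rw [← hwsum]
      simp [hc, mul_comm]
    have hcz : c = 0 := (mul_eq_zero.mp hKc).resolve_left hKne
    have hzero : v - (A * Aplus) *ᵥ v = 0 := funext fun k => by simp [hc k, hcz]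
    exact ⟨Aplus *ᵥ v, by rw [Matrix.mulVec_mulVec]; exact (sub_eq_zero.mp hzero).symm⟩
  have hADi : A * D⁻¹ = 1 - D * O := by
    rw [hAdef, sub_mul, Matrix.mul_assoc (D * O) D D⁻¹, hDDi, Matrix.mul_one]
  have hkey : A * (Aplus - D⁻¹ - O) * A = (D * O * S) * B * (S * O * D) := by
    have e1 : A * (Aplus - D⁻¹ - O) * A
        = A * Aplus * A - A * D⁻¹ * A - A * O * A := by noncomm_ring
    have e2 : (D * O * S) * B * (S * O * D) = (D * O) * (S * B * S) * (O * D) := by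
      noncomm_ring
    rw [e1, hMP1, hADi, e2, hSBS, hAdef]
    noncomm_ring
  have hT : (D * O * S)ᵀ = S * O * D := by
    rw [Matrix.transpose_mul, Matrix.transpose_mul, hOt, hDdef, hSdef,
      Matrix.diagonal_transpose, Matrix.diagonal_transpose, Matrix.mul_assoc]
  have main : (A *ᵥ u) ⬝ᵥ ((Aplus - D⁻¹ - O) *ᵥ (A *ᵥ u))
      = ((S * O * D) *ᵥ u) ⬝ᵥ (B *ᵥ ((S * O * D) *ᵥ u)) := by
    have hxA : A *ᵥ u = u ᵥ* A := by rw [← Matrix.mulVec_transpose, hAsymm]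
    calc (A *ᵥ u) ⬝ᵥ ((Aplus - D⁻¹ - O) *ᵥ (A *ᵥ u))
        = (u ᵥ* A) ⬝ᵥ (((Aplus - D⁻¹ - O) * A) *ᵥ u) := by
          rw [Matrix.mulVec_mulVec, hxA]
      _ = u ⬝ᵥ ((A * ((Aplus - D⁻¹ - O) * A)) *ᵥ u) := by
          rw [← Matrix.dotProduct_mulVec, Matrix.mulVec_mulVec]
      _ = u ⬝ᵥ (((D * O * S) * B * (S * O * D)) *ᵥ u) := by
          rw [← Matrix.mul_assoc, hkey]
      _ = u ⬝ᵥ ((D * O * S) *ᵥ (B *ᵥ ((S * O * D) *ᵥ u))) := by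
          rw [Matrix.mulVec_mulVec, Matrix.mulVec_mulVec]
      _ = ((S * O * D) *ᵥ u) ⬝ᵥ (B *ᵥ ((S * O * D) *ᵥ u)) := by
          rw [Matrix.dotProduct_mulVec, ← Matrix.mulVec_transpose, hT]
  rw [← hAu, main]
  simpa using hBPSD.dotProduct_mulVec_nonneg ((S * O * D) *ᵥ u)
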